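/- If η is a random variable with Beta(i+1, j+1) distribution (i, j nonnegative integers), then E[η log η] = (i+1)/(i+j+2) · (H(i+1) − H(i+j+2)), where H denotes harmonic numbers. -/

import Mathlib

open MeasureTheory
open scoped NNReal ENNReal

/-- The `n`-th harmonic number. -/
noncomputable def H (n : ℕ) : ℝ := ∑ k ∈ Finset.range n, (1 : ℝ) / (k + 1)

/-- The Beta(i+1, j+1) distribution on ℝ, given by the density
`x^i (1-x)^j / B(i+1, j+1)` on (0,1). -/
noncomputable def betaMeasure (i j : ℕ) : Measure ℝ :=
  volume.withDensity fun x =>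
    ENNReal.ofReal
      (Set.indicator (Set.Ioo (0:ℝ) 1)
        (fun x => x ^ i * (1 - x) ^ j *
          (Real.Gamma ((i : ℝ) + (j : ℝ) + 2) /
            (Real.Gamma ((i : ℝ) + 1) * Real.Gamma ((j : ℝ) + 1)))) x)

lemma H_succ (n : ℕ) : H (n + 1) = H n + 1 / ((n : ℝ) + 1) := by
  simp [H, Finset.sum_range_succ]

lemma myBase (m : ℕ) :
    ∫ x in (0:ℝ)..1, x ^ m * (x * Real.log x) = -(1 / ((m : ℝ) + 2) ^ 2) := by
  have hm2 : ((m : ℝ) + 2) ≠ 0 := by positivity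
  set F : ℝ → ℝ := fun y => y ^ (m + 2) * Real.log y / ((m : ℝ) + 2)
      - y ^ (m + 2) / ((m : ℝ) + 2) ^ 2 with hFdef
  have hF : F = fun y => y ^ (m + 1) * (y * Real.log y) / ((m : ℝ) + 2)
      - y ^ (m + 2) / ((m : ℝ) + 2) ^ 2 := by
    funext y; simp only [hFdef]; ring
  have hcont : ContinuousOn F (Set.Icc 0 1) := by
    rw [hF]
    exact ((((continuous_pow _).mul Real.continuous_mul_log).div_const _).sub
      ((continuous_pow _).div_const _)).continuousOn
  have hderiv : ∀ x ∈ Set.Ioo (0:ℝ) 1, HasDerivAt F (x ^ m * (x * Real.log x)) x := by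
    intro x hx
    have hx0 : x ≠ 0 := ne_of_gt hx.1
    have h1 : HasDerivAt (fun y : ℝ => y ^ (m + 2) * Real.log y)
        ((↑(m + 2) * x ^ (m + 1)) * Real.log x + x ^ (m + 2) * x⁻¹) x := by
      simpa [Pi.mul_def] using (hasDerivAt_pow (m + 2) x).mul (Real.hasDerivAt_log hx0)
    have h2 := (h1.div_const ((m : ℝ) + 2)).sub
      ((hasDerivAt_pow (m + 2) x).div_const (((m : ℝ) + 2) ^ 2))
    refine (h2 : HasDerivAt F _ x).congr_deriv ?_
    push_cast
    field_simp
    ring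
  have hint : IntervalIntegrable (fun x : ℝ => x ^ m * (x * Real.log x)) volume 0 1 :=
    ((continuous_pow m).mul Real.continuous_mul_log).intervalIntegrable 0 1
  rw [intervalIntegral.integral_eq_sub_of_hasDerivAt_of_le zero_le_one hcont hderiv hint]
  simp [hFdef, Real.log_one, Real.log_zero, zero_pow, Nat.succ_ne_zero]

lemma myMain (j : ℕ) : ∀ m : ℕ,
    ∫ x in (0:ℝ)..1, x ^ m * (1 - x) ^ j * (x * Real.log x)
      = ((m + 1).factorial * j.factorial / (m + j + 2).factorial : ℝ)
        * (H (m + 1) - H (m + j + 2)) := by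
  induction j with
  | zero =>
      intro m
      have : ∫ x in (0:ℝ)..1, x ^ m * (1 - x) ^ 0 * (x * Real.log x)
          = ∫ x in (0:ℝ)..1, x ^ m * (x * Real.log x) := by
        apply intervalIntegral.integral_congr
        intro x _; ring
      rw [this, myBase m]
      have hfac : ((m + 0 + 2).factorial : ℝ) = ((m : ℝ) + 2) * (m + 1).factorial := by
        have : m + 0 + 2 = (m + 1) + 1 := by omega
        rw [this, Nat.factorial_succ]
        push_cast
        ring
      have hH : H (m + 0 + 2) = H (m + 1) + 1 / ((m : ℝ) + 2) := by
        have : m + 0 + 2 = (m + 1) + 1 := by omega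
        rw [this, H_succ]
        push_cast
        ring_nf
      rw [hfac, hH]
      have hfacne : ((m + 1).factorial : ℝ) ≠ 0 := by positivity
      field_simp
      ring
  | succ j ih =>
      intro m
      have hsplit : ∫ x in (0:ℝ)..1, x ^ m * (1 - x) ^ (j + 1) * (x * Real.log x)
          = (∫ x in (0:ℝ)..1, x ^ m * (1 - x) ^ j * (x * Real.log x))
            - ∫ x in (0:ℝ)..1, x ^ (m + 1) * (1 - x) ^ j * (x * Real.log x) := by
        rw [← intervalIntegral.integral_sub (f := fun x => x ^ m * (1 - x) ^ j * (x * Real.log x))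
          (g := fun x => x ^ (m + 1) * (1 - x) ^ j * (x * Real.log x))
          ((((continuous_pow m).mul ((continuous_const.sub continuous_id').pow j)).mul
              Real.continuous_mul_log).intervalIntegrable 0 1)
          ((((continuous_pow (m + 1)).mul ((continuous_const.sub continuous_id').pow j)).mul
              Real.continuous_mul_log).intervalIntegrable 0 1)]
        apply intervalIntegral.integral_congr
        intro x _; ring
      rw [hsplit, ih m, ih (m + 1)]
      -- index normalizations
      have e1 : m + (j + 1) + 2 = (m + j + 2) + 1 := by omega
      have e2 : (m + 1) + j + 2 = (m + j + 2) + 1 := by omega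
      have e3 : (m + 1) + 1 = m + 2 := by omega
      rw [e1, e2, e3, H_succ (m + j + 2)]
      have hHm2 : H (m + 2) = H (m + 1) + 1 / ((m : ℝ) + 2) := by
        have : m + 2 = (m + 1) + 1 := by omega
        rw [this, H_succ]; push_cast; ring_nf
      rw [hHm2]
      -- factorial normalizations
      have f1 : (((m + j + 2) + 1).factorial : ℝ)
          = ((m : ℝ) + j + 3) * (m + j + 2).factorial := by
        rw [Nat.factorial_succ]; push_cast; ring
      have f2 : ((j + 1).factorial : ℝ) = ((j : ℝ) + 1) * j.factorial := by
        rw [Nat.factorial_succ]; push_cast; ring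
      have f3 : ((m + 2).factorial : ℝ) = ((m : ℝ) + 2) * (m + 1).factorial := by
        have : m + 2 = (m + 1) + 1 := by omega
        rw [this, Nat.factorial_succ]; push_cast; ring
      rw [f1, f2, f3]
      have h1 : ((m + 1).factorial : ℝ) ≠ 0 := by positivity
      have h2 : ((j).factorial : ℝ) ≠ 0 := by positivity
      have h3 : ((m + j + 2).factorial : ℝ) ≠ 0 := by positivity
      have h4 : ((m : ℝ) + j + 3) ≠ 0 := by positivity
      have h5 : ((m : ℝ) + 2) ≠ 0 := by positivity
      field_simp
      push_cast
      ring

theorem stmt_1 (i j : ℕ) {Ω : Type*} [MeasurableSpace Ω] (P : Measure Ω)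
    [IsProbabilityMeasure P] (η : Ω → ℝ) (hη : Measurable η)
    (hlaw : Measure.map η P = betaMeasure i j) :
    ∫ ω, η ω * Real.log (η ω) ∂P
      = (((i : ℝ) + 1) / ((i : ℝ) + (j : ℝ) + 2)) * (H (i + 1) - H (i + j + 2)) := by
  classical
  set C : ℝ := Real.Gamma ((i : ℝ) + (j : ℝ) + 2) /
      (Real.Gamma ((i : ℝ) + 1) * Real.Gamma ((j : ℝ) + 1)) with hC
  set d : ℝ → ℝ := Set.indicator (Set.Ioo (0:ℝ) 1)
      (fun x => x ^ i * (1 - x) ^ j * C) with hd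
  have hdmeas : Measurable d :=
    (((measurable_id.pow_const i).mul
      ((measurable_const.sub measurable_id).pow_const j)).mul measurable_const).indicator
      measurableSet_Ioo
  have hdnonneg : ∀ x, 0 ≤ d x := by
    intro x
    apply Set.indicator_nonneg
    intro y hy
    have hC0 : 0 ≤ C := by
      rw [hC]
      have g1 : 0 < Real.Gamma ((i : ℝ) + (j : ℝ) + 2) := Real.Gamma_pos_of_pos (by positivity)
      have g2 : 0 < Real.Gamma ((i : ℝ) + 1) := Real.Gamma_pos_of_pos (by positivity)
      have g3 : 0 < Real.Gamma ((j : ℝ) + 1) := Real.Gamma_pos_of_pos (by positivity)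
      positivity
    have := hy.1.le
    have := hy.2.le
    have h1x : (0:ℝ) ≤ 1 - y := by linarith [hy.2.le]
    have h0y : (0:ℝ) ≤ y := hy.1.le
    positivity
  -- step 1: transfer to the beta measure
  have step1 : ∫ ω, η ω * Real.log (η ω) ∂P = ∫ x, x * Real.log x ∂(betaMeasure i j) := by
    rw [← hlaw]
    exact (integral_map hη.aemeasurable
      Real.continuous_mul_log.measurable.aestronglyMeasurable).symm
  -- step 2: withDensity
  have step2 : ∫ x, x * Real.log x ∂(betaMeasure i j)
      = ∫ x, d x * (x * Real.log x) := by
    have : betaMeasure i j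
        = volume.withDensity fun x => ((Real.toNNReal (d x) : ℝ≥0) : ℝ≥0∞) := rfl
    rw [this, integral_withDensity_eq_integral_smul hdmeas.real_toNNReal]
    congr 1
    funext x
    rw [NNReal.smul_def, Real.coe_toNNReal _ (hdnonneg x)]
    rfl
  -- step 3: indicator to set integral
  have step3 : ∫ x, d x * (x * Real.log x)
      = ∫ x in Set.Ioo (0:ℝ) 1, (x ^ i * (1 - x) ^ j * C) * (x * Real.log x) := by
    rw [← integral_indicator measurableSet_Ioo]
    congr 1
    funext x
    rw [hd]
    by_cases hx : x ∈ Set.Ioo (0:ℝ) 1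
    · simp [Set.indicator_of_mem hx]
    · simp [Set.indicator_of_notMem hx]
  -- step 4: to interval integral and compute
  have step4 : ∫ x in Set.Ioo (0:ℝ) 1, (x ^ i * (1 - x) ^ j * C) * (x * Real.log x)
      = C * ∫ x in (0:ℝ)..1, x ^ i * (1 - x) ^ j * (x * Real.log x) := by
    rw [← MeasureTheory.integral_Ioc_eq_integral_Ioo,
      ← intervalIntegral.integral_of_le zero_le_one,
      ← intervalIntegral.integral_const_mul]
    apply intervalIntegral.integral_congr
    intro x _; ring
  rw [step1, step2, step3, step4, myMain j i]
  -- final constants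
  have hCval : C = ((i + j + 1).factorial : ℝ) / ((i.factorial : ℝ) * (j.factorial : ℝ)) := by
    rw [hC]
    have g1 : Real.Gamma ((i : ℝ) + (j : ℝ) + 2) = ((i + j + 1).factorial : ℝ) := by
      have : (i : ℝ) + (j : ℝ) + 2 = ((i + j + 1 : ℕ) : ℝ) + 1 := by push_cast; ring
      rw [this, Real.Gamma_nat_eq_factorial]
    have g2 : Real.Gamma ((i : ℝ) + 1) = (i.factorial : ℝ) := by
      rw [Real.Gamma_nat_eq_factorial]
    have g3 : Real.Gamma ((j : ℝ) + 1) = (j.factorial : ℝ) := by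
      rw [Real.Gamma_nat_eq_factorial]
    rw [g1, g2, g3]
  rw [hCval]
  have f1 : ((i + 1).factorial : ℝ) = ((i : ℝ) + 1) * i.factorial := by
    rw [Nat.factorial_succ]; push_cast; ring
  have f2 : ((i + j + 2).factorial : ℝ) = ((i : ℝ) + j + 2) * (i + j + 1).factorial := by
    have : i + j + 2 = (i + j + 1) + 1 := by omega
    rw [this, Nat.factorial_succ]; push_cast; ring
  rw [f1, f2]
  have h1 : ((i).factorial : ℝ) ≠ 0 := by positivity
  have h2 : ((j).factorial : ℝ) ≠ 0 := by positivity
  have h3 : ((i + j + 1).factorial : ℝ) ≠ 0 := by positivity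
  have h4 : ((i : ℝ) + j + 2) ≠ 0 := by positivity
  field_simp
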